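/- In any flip sector S containing both type-0 and type-3 particles, there exists a site i such that either (i ∈ R_S(3) and i+1 ∈ R_S(0)) or (i ∈ R_S(0) and i+1 ∈ R_S(3)); i.e., the disjoint regions of confinement R_S(0) and R_S(3) touch at some point. -/
import Mathlib


/-- A single flip: the values at two adjacent sites, which differ by exactly 1,
are swapped; all other sites are unchanged. -/
def FlipStep {N k : ℕ} (c c' : Fin N → Fin k) : Prop :=
  ∃ j j' : Fin N, j.val + 1 = j'.val ∧
    ((c j').val = (c j).val + 1 ∨ (c j).val = (c j').val + 1) ∧
    c' j = c j' ∧ c' j' = c j ∧ ∀ i : Fin N, i ≠ j → i ≠ j' → c' i = c i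

/-- Two configurations are in the same sector iff they are related by finitely many flips. -/
def SameSector {N k : ℕ} (c c' : Fin N → Fin k) : Prop :=
  Relation.ReflTransGen FlipStep c c'

/-- The region of confinement of type-`n` particles in the sector of `c`:
all sites that a type-`n` particle can occupy in some configuration of the sector. -/
def RoC {N k : ℕ} (c : Fin N → Fin k) (n : Fin k) : Set (Fin N) :=
  {j | ∃ c', SameSector c c' ∧ c' j = n}

/-- Perform a single flip at adjacent positions `j, j'`. -/
lemma flipStep_exists {N : ℕ} (c : Fin N → Fin 4) (j j' : Fin N)
    (h1 : j.val + 1 = j'.val)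
    (h2 : (c j').val = (c j).val + 1 ∨ (c j).val = (c j').val + 1) :
    ∃ c', FlipStep c c' ∧ c' j = c j' ∧ c' j' = c j ∧
      ∀ i : Fin N, i ≠ j → i ≠ j' → c' i = c i := by
  have hjj : j ≠ j' := Fin.ne_of_val_ne (by omega)
  set c' := Function.update (Function.update c j (c j')) j' (c j) with hc'
  have e1 : c' j = c j' := by
    rw [hc', Function.update_of_ne hjj, Function.update_self]
  have e2 : c' j' = c j := by rw [hc', Function.update_self]
  have e3 : ∀ i : Fin N, i ≠ j → i ≠ j' → c' i = c i := by
    intro i hij hij'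
    rw [hc', Function.update_of_ne hij', Function.update_of_ne hij]
  exact ⟨c', ⟨j, j', h1, h2, e1, e2, e3⟩, e1, e2, e3⟩

/-- Push a `1` left through a block of `2`s until it swaps with the `0` at `p`;
afterwards position `p+1` holds the `0`, and everything right of `s` is unchanged. -/
lemma push_lemma {N : ℕ} (c₀ : Fin N → Fin 4) : ∀ (t : ℕ) (c : Fin N → Fin 4) (p s : Fin N),
    SameSector c₀ c → p.val < s.val → c p = 0 → c s = 1 →
    (∀ i : Fin N, p.val < i.val → i.val < s.val → c i = 2) →
    s.val - p.val ≤ t →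
    ∃ c', SameSector c₀ c' ∧ (∃ h : p.val + 1 < N, c' ⟨p.val + 1, h⟩ = 0) ∧
      ∀ i : Fin N, s.val < i.val → c' i = c i := by
  intro t
  induction t with
  | zero => intro c p s _ hps _ _ _ hd; omega
  | succ t ih =>
    intro c p s hsec hps hp hs hmid hd
    by_cases hcase : s.val = p.val + 1
    · obtain ⟨c', hstep, e1, e2, e3⟩ := flipStep_exists c p s (by omega)
        (by rw [hp, hs]; left; decide)
      refine ⟨c', hsec.tail hstep, ⟨by omega, ?_⟩, fun i hi => e3 i
        (Fin.ne_of_val_ne (by omega)) (Fin.ne_of_val_ne (by omega))⟩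
      have hPs : (⟨p.val + 1, by omega⟩ : Fin N) = s := Fin.ext (by simp [hcase])
      rw [hPs, e2, hp]
    · have hs1N : s.val - 1 < N := by omega
      set s1 : Fin N := ⟨s.val - 1, hs1N⟩ with hs1
      have hvs1 : s1.val = s.val - 1 := rfl
      have hcs1 : c s1 = 2 := hmid s1 (by omega) (by omega)
      obtain ⟨c', hstep, e1, e2, e3⟩ := flipStep_exists c s1 s (by omega)
        (by rw [hcs1, hs]; right; decide)
      have hp' : c' p = 0 := by
        rw [e3 p (Fin.ne_of_val_ne (by omega)) (Fin.ne_of_val_ne (by omega))]; exact hp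
      obtain ⟨c'', hsec'', hp1, hrest⟩ := ih c' p s1 (hsec.tail hstep)
        (by omega) hp' (by rw [e1, hs])
        (fun i h1 h2 => by
          rw [e3 i (Fin.ne_of_val_ne (by omega)) (Fin.ne_of_val_ne (by omega))]
          exact hmid i h1 (by omega))
        (by omega)
      refine ⟨c'', hsec'', hp1, fun i hi => ?_⟩
      rw [hrest i (by omega),
        e3 i (Fin.ne_of_val_ne (by omega)) (Fin.ne_of_val_ne (by omega))]

/-- Main induction: if some configuration in the sector of `c₀` has a `0` at `p` and
a `3` at `q` with `p < q`, then the regions of confinement touch. -/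
lemma outer_lemma {N : ℕ} (c₀ : Fin N → Fin 4) : ∀ (d : ℕ) (c : Fin N → Fin 4) (p q : Fin N),
    SameSector c₀ c → c p = 0 → c q = 3 → p.val < q.val → q.val - p.val ≤ d →
    ∃ i i' : Fin N, i.val + 1 = i'.val ∧
      ((i ∈ RoC c₀ 3 ∧ i' ∈ RoC c₀ 0) ∨ (i ∈ RoC c₀ 0 ∧ i' ∈ RoC c₀ 3)) := by
  intro d
  induction d with
  | zero => intro c p q _ _ _ hpq hd; omega
  | succ d ih =>
    intro c p q hsec hp hq hpq hd
    by_cases hbase : q.val = p.val + 1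
    · exact ⟨p, q, hbase.symm, Or.inr ⟨⟨c, hsec, hp⟩, ⟨c, hsec, hq⟩⟩⟩
    · have hq2 : p.val + 2 ≤ q.val := by omega
      classical
      have hex : ∃ m, p.val < m ∧ ∃ h : m < N, c ⟨m, h⟩ ≠ 2 :=
        ⟨q.val, hpq, q.isLt, by rw [Fin.eta, hq]; decide⟩
      obtain ⟨hps, hsN, hs2⟩ := Nat.find_spec hex
      set s := Nat.find hex with hs_def
      have hsq : s ≤ q.val := Nat.find_min' hex ⟨hpq, q.isLt, by rw [Fin.eta, hq]; decide⟩
      have hmid : ∀ i : Fin N, p.val < i.val → i.val < s → c i = 2 := by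
        intro i h1 h2
        by_contra hne
        exact Nat.find_min hex h2 ⟨h1, i.isLt, by rw [Fin.eta]; exact hne⟩
      set S : Fin N := ⟨s, hsN⟩ with hS
      have hSv : S.val = s := rfl
      have hfour : ∀ v : Fin 4, v = 0 ∨ v = 1 ∨ v = 2 ∨ v = 3 := by decide
      rcases hfour (c S) with h | h | h | h
      · -- a 0 strictly inside: recurse with (S, q)
        have hsltq : s < q.val := by
          rcases lt_or_eq_of_le hsq with h' | h'
          · exact h'
          · exfalso; have : S = q := Fin.ext (by omega)
            rw [this, hq] at h; exact absurd h (by decide)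
        exact ih c S q hsec h hq hsltq (by omega)
      · -- a 1: push it left through the 2s
        have hsltq : s < q.val := by
          rcases lt_or_eq_of_le hsq with h' | h'
          · exact h'
          · exfalso; have : S = q := Fin.ext (by omega)
            rw [this, hq] at h; exact absurd h (by decide)
        obtain ⟨c', hsec', ⟨hP1N, hp1⟩, hrest⟩ := push_lemma c₀ s c p S hsec hps hp h
          (fun i h1 h2 => hmid i h1 h2) (by omega)
        have hq' : c' q = 3 := by rw [hrest q (by omega)]; exact hq
        have hP1v : (⟨p.val + 1, hP1N⟩ : Fin N).val = p.val + 1 := rfl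
        exact ih c' ⟨p.val + 1, hP1N⟩ q hsec' hp1 hq' (by omega) (by omega)
      · exact absurd h hs2
      · -- a 3: either adjacent to p, or pull it one step left
        by_cases hadj : s = p.val + 1
        · exact ⟨p, S, hadj.symm, Or.inr ⟨⟨c, hsec, hp⟩, ⟨c, hsec, h⟩⟩⟩
        · have hs1N : s - 1 < N := by omega
          set S1 : Fin N := ⟨s - 1, hs1N⟩ with hS1
          have hS1v : S1.val = s - 1 := rfl
          have hcs1 : c S1 = 2 := hmid S1 (by omega) (by omega)
          obtain ⟨c', hstep, e1, e2, e3⟩ := flipStep_exists c S1 S (by omega)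
            (by rw [h, hcs1]; left; decide)
          have hp' : c' p = 0 := by
            rw [e3 p (Fin.ne_of_val_ne (by omega)) (Fin.ne_of_val_ne (by omega))]; exact hp
          have h3' : c' S1 = 3 := by rw [e1, h]
          exact ih c' p S1 (hsec.tail hstep) hp' h3' (by omega) (by omega)

/-- Value negation `v ↦ 3 - v`, which exchanges the roles of `0` and `3`. -/
def negc : Fin 4 → Fin 4 := fun v => ⟨3 - v.val, by omega⟩

lemma negc_negc (v : Fin 4) : negc (negc v) = v := by
  apply Fin.ext
  have := v.isLt
  show 3 - (3 - v.val) = v.val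
  omega

lemma flip_neg {N : ℕ} {a b : Fin N → Fin 4} (h : FlipStep a b) :
    FlipStep (negc ∘ a) (negc ∘ b) := by
  obtain ⟨j, j', h1, h2, h3, h4, h5⟩ := h
  refine ⟨j, j', h1, ?_, ?_, ?_, ?_⟩
  · have ha := (a j).isLt
    have hb := (a j').isLt
    show 3 - (a j').val = (3 - (a j).val) + 1 ∨ 3 - (a j).val = (3 - (a j').val) + 1
    omega
  · show negc (b j) = negc (a j'); rw [h3]
  · show negc (b j') = negc (a j); rw [h4]
  · intro i hi hi'; show negc (b i) = negc (a i); rw [h5 i hi hi']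

lemma sector_neg {N : ℕ} {a b : Fin N → Fin 4} (h : SameSector a b) :
    SameSector (negc ∘ a) (negc ∘ b) := by
  induction h with
  | refl => exact Relation.ReflTransGen.refl
  | tail _ hstep ihs => exact ihs.tail (flip_neg hstep)

lemma RoC_neg {N : ℕ} (c : Fin N → Fin 4) (n : Fin 4) (j : Fin N)
    (h : j ∈ RoC (negc ∘ c) n) : j ∈ RoC c (negc n) := by
  obtain ⟨c', hs, hv⟩ := h
  refine ⟨negc ∘ c', ?_, ?_⟩
  · have hss := sector_neg hs
    have e : negc ∘ (negc ∘ c) = c := funext fun i => negc_negc _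
    rwa [e] at hss
  · show negc (c' j) = negc n; rw [hv]

/-- In any sector containing both a type-0 and a type-3 particle, the (disjoint) regions
of confinement `R_S(0)` and `R_S(3)` touch: there are adjacent sites `i, i+1` with one in
`R_S(3)` and the other in `R_S(0)` (in either order). -/
theorem RoC_zero_touches_RoC_three {N : ℕ} (c : Fin N → Fin 4)
    (h0 : ∃ j, c j = 0) (h3 : ∃ j, c j = 3) :
    ∃ (i i' : Fin N), i.val + 1 = i'.val ∧
      ((i ∈ RoC c 3 ∧ i' ∈ RoC c 0) ∨ (i ∈ RoC c 0 ∧ i' ∈ RoC c 3)) := by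
  obtain ⟨j0, hj0⟩ := h0
  obtain ⟨j3, hj3⟩ := h3
  rcases lt_trichotomy j0.val j3.val with h | h | h
  · exact outer_lemma c (j3.val - j0.val) c j0 j3 Relation.ReflTransGen.refl hj0 hj3 h le_rfl
  · exfalso
    have : j0 = j3 := Fin.ext h
    rw [this, hj3] at hj0
    exact absurd hj0 (by decide)
  · have hn0 : (negc ∘ c) j3 = 0 := by show negc (c j3) = 0; rw [hj3]; decide
    have hn3 : (negc ∘ c) j0 = 3 := by show negc (c j0) = 3; rw [hj0]; decide
    obtain ⟨i, i', h1, h2⟩ := outer_lemma (negc ∘ c) (j0.val - j3.val) (negc ∘ c) j3 j0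
      Relation.ReflTransGen.refl hn0 hn3 h le_rfl
    have e0 : negc 3 = 0 := by decide
    have e3 : negc 0 = 3 := by decide
    refine ⟨i, i', h1, ?_⟩
    rcases h2 with ⟨ha, hb⟩ | ⟨ha, hb⟩
    · exact Or.inr ⟨e0 ▸ RoC_neg c 3 i ha, e3 ▸ RoC_neg c 0 i' hb⟩
    · exact Or.inl ⟨e3 ▸ RoC_neg c 0 i ha, e0 ▸ RoC_neg c 3 i' hb⟩
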